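/- State space truncation error bound: let P solve the CME on the full (finite but larger) state space and P^Ω solve the restricted CME on a subset Ω with the same initial data restricted to Ω. If the mass of the truncated solution satisfies ∑_{x∈Ω} P^Ω(t,x) ≥ 1 - ε, then P(t,x) - ε ≤ P^Ω(t,x) ≤ P(t,x) for all x ∈ Ω. -/

import Mathlib

open Matrix

section FSPAux

open NormedSpace

private theorem fsp_exp_entry_hasSum {m : Type*} [Fintype m] [DecidableEq m]
    (M : Matrix m m ℝ) (i j : m) :
    HasSum (fun n : ℕ => ((n.factorial : ℝ)⁻¹) * (M ^ n) i j) (exp M i j) := by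
  letI : SeminormedRing (Matrix m m ℝ) := Matrix.linftyOpSemiNormedRing
  letI : NormedRing (Matrix m m ℝ) := Matrix.linftyOpNormedRing
  letI : NormedAlgebra ℝ (Matrix m m ℝ) := Matrix.linftyOpNormedAlgebra
  have h : HasSum (fun n : ℕ => ((n.factorial : ℝ)⁻¹) • M ^ n) (exp M) :=
    exp_series_hasSum_exp' M
  have h2 := h.map (AddMonoidHom.mk' (fun x : Matrix m m ℝ => x i j) (fun _ _ => rfl))
    (by show Continuous fun x : Matrix m m ℝ => x i j
        exact Continuous.comp (continuous_apply j) (continuous_apply (A := fun _ : m => m → ℝ) i))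
  exact h2

private theorem fsp_exp_shift {m : Type*} [Fintype m] [DecidableEq m]
    (B : Matrix m m ℝ) (s : ℝ) :
    exp B = Real.exp (-s) • exp (B + s • (1 : Matrix m m ℝ)) := by
  letI : SeminormedRing (Matrix m m ℝ) := Matrix.linftyOpSemiNormedRing
  letI : NormedRing (Matrix m m ℝ) := Matrix.linftyOpNormedRing
  letI : NormedAlgebra ℝ (Matrix m m ℝ) := Matrix.linftyOpNormedAlgebra
  have hc : Commute B (s • (1 : Matrix m m ℝ)) := (Commute.one_right B).smul_right s
  have h1 : s • (1 : Matrix m m ℝ) = algebraMap ℝ (Matrix m m ℝ) s := by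
    rw [Algebra.algebraMap_eq_smul_one]
  rw [Matrix.exp_add_of_commute _ _ hc, h1]
  erw [← algebraMap_exp_comm]
  rw [← Real.exp_eq_exp_ℝ,
    Algebra.algebraMap_eq_smul_one, mul_smul_comm, mul_one, smul_smul,
    ← Real.exp_add, neg_add_cancel, Real.exp_zero, one_smul]

private theorem fsp_pow_nonneg {m : Type*} [Fintype m] [DecidableEq m]
    (M : Matrix m m ℝ) (h : ∀ i j, 0 ≤ M i j) (n : ℕ) (i j : m) :
    0 ≤ (M ^ n) i j := by
  induction n generalizing i j with
  | zero => simp [Matrix.one_apply]; split <;> norm_num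
  | succ n ih =>
    rw [pow_succ, Matrix.mul_apply]
    exact Finset.sum_nonneg fun k _ => mul_nonneg (ih i k) (h k j)

private theorem fsp_sum_subtype_le {S : Type*} [Fintype S] (Ω : Set S) [DecidablePred (· ∈ Ω)]
    (f : S → ℝ) (hf : ∀ i, 0 ≤ f i) :
    ∑ x : Ω, f x.val ≤ ∑ x, f x := by
  rw [← Finset.sum_subtype (Finset.univ.filter (· ∈ Ω)) (by simp) f]
  exact Finset.sum_le_sum_of_subset_of_nonneg (Finset.filter_subset _ _) fun i _ _ => hf i

private theorem fsp_pow_sub_le {S : Type*} [Fintype S] [DecidableEq S]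
    (Ω : Set S) [DecidablePred (· ∈ Ω)]
    (M : Matrix S S ℝ) (hM : ∀ i j, 0 ≤ M i j) (n : ℕ) (x y : Ω) :
    ((M.submatrix (Subtype.val : Ω → S) Subtype.val) ^ n) x y ≤ (M ^ n) x.val y.val := by
  induction n generalizing x y with
  | zero =>
    simp [Matrix.one_apply, Subtype.ext_iff]
  | succ n ih =>
    rw [pow_succ, pow_succ, Matrix.mul_apply, Matrix.mul_apply]
    calc ∑ z : Ω, ((M.submatrix Subtype.val Subtype.val) ^ n) x z *
            (M.submatrix Subtype.val Subtype.val) z y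
        ≤ ∑ z : Ω, (M ^ n) x.val z.val * M z.val y.val := by
          refine Finset.sum_le_sum fun z _ => ?_
          have hz : (M.submatrix Subtype.val Subtype.val) z y = M z.val y.val := rfl
          rw [hz]
          exact mul_le_mul_of_nonneg_right (ih x z) (hM _ _)
      _ ≤ ∑ z, (M ^ n) x.val z * M z y.val :=
          fsp_sum_subtype_le Ω (fun z => (M ^ n) x.val z * M z y.val)
            (fun z => mul_nonneg (fsp_pow_nonneg M hM n _ _) (hM _ _))

private theorem fsp_exp_nonneg {m : Type*} [Fintype m] [DecidableEq m]
    (M : Matrix m m ℝ) (h : ∀ i j, 0 ≤ M i j) (i j : m) : 0 ≤ exp M i j :=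
  hasSum_le (fun n => mul_nonneg (by positivity) (fsp_pow_nonneg M h n i j))
    hasSum_zero (fsp_exp_entry_hasSum M i j)

private theorem fsp_exp_sub_le {S : Type*} [Fintype S] [DecidableEq S]
    (Ω : Set S) [DecidablePred (· ∈ Ω)]
    (M : Matrix S S ℝ) (hM : ∀ i j, 0 ≤ M i j) (x y : Ω) :
    exp (M.submatrix (Subtype.val : Ω → S) Subtype.val) x y ≤ exp M x.val y.val :=
  hasSum_le
    (fun n => mul_le_mul_of_nonneg_left (fsp_pow_sub_le Ω M hM n x y) (by positivity))
    (fsp_exp_entry_hasSum _ x y) (fsp_exp_entry_hasSum M x.val y.val)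

private theorem fsp_colsum_pow {m : Type*} [Fintype m] [DecidableEq m]
    (M : Matrix m m ℝ) (h : ∀ j, ∑ i, M i j = 0) (n : ℕ) (j : m) :
    ∑ i, (M ^ n) i j = if n = 0 then 1 else 0 := by
  induction n generalizing j with
  | zero => simp [Matrix.one_apply]
  | succ n ih =>
    rw [pow_succ', if_neg (Nat.succ_ne_zero n)]
    simp only [Matrix.mul_apply]
    rw [Finset.sum_comm]
    simp [← Finset.sum_mul, h]

private theorem fsp_colsum_exp {m : Type*} [Fintype m] [DecidableEq m]
    (M : Matrix m m ℝ) (h : ∀ j, ∑ i, M i j = 0) (j : m) :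
    ∑ i, exp M i j = 1 := by
  have hs : HasSum (fun n : ℕ => ∑ i, ((n.factorial : ℝ)⁻¹ * (M ^ n) i j))
      (∑ i, exp M i j) :=
    hasSum_sum fun i _ => fsp_exp_entry_hasSum M i j
  have he : (fun n : ℕ => ∑ i, ((n.factorial : ℝ)⁻¹ * (M ^ n) i j)) =
      fun n : ℕ => if n = 0 then (1 : ℝ) else 0 := by
    funext n
    rw [← Finset.mul_sum, fsp_colsum_pow M h]
    rcases n with _ | n <;> simp
  rw [he] at hs
  have h1 : HasSum (fun n : ℕ => if n = 0 then (1 : ℝ) else 0) 1 := by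
    simpa [eq_comm] using hasSum_ite_eq (0 : ℕ) (1 : ℝ)
  exact hs.unique h1

end FSPAux

/-- Munsky–Khammash finite state projection bound.  If the mass of
the truncated solution is at least `1 - ε`, then on the truncated state space
the truncated solution is squeezed between `P(t) - ε` and `P(t)`. -/
theorem fsp_truncation_error_bound (S : Type*) [Fintype S] [DecidableEq S]
    (Ω : Set S) [DecidablePred (· ∈ Ω)]
    (A : Matrix S S ℝ)
    (hMetzler : ∀ i j, i ≠ j → 0 ≤ A i j)
    (hcols : ∀ j, ∑ i, A i j = 0)
    (P0 : S → ℝ) (hP0 : ∀ i, 0 ≤ P0 i) (hP0sum : ∑ i, P0 i = 1)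
    (t : ℝ) (ht : 0 ≤ t) (ε : ℝ) (hε : 0 ≤ ε)
    (hmass : 1 - ε ≤ ∑ x : Ω,
      (NormedSpace.exp (t • A.submatrix (Subtype.val : Ω → S) Subtype.val)).mulVec
        (fun y : Ω => P0 y) x) :
    ∀ x : Ω,
      (NormedSpace.exp (t • A)).mulVec P0 x - ε ≤
        (NormedSpace.exp (t • A.submatrix (Subtype.val : Ω → S) Subtype.val)).mulVec
          (fun y : Ω => P0 y) x ∧
      (NormedSpace.exp (t • A.submatrix (Subtype.val : Ω → S) Subtype.val)).mulVec
          (fun y : Ω => P0 y) x ≤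
        (NormedSpace.exp (t • A)).mulVec P0 x := by
  classical
  set c : ℝ := ∑ i, |A i i| with hc
  have hcA : ∀ i, 0 ≤ A i i + c := by
    intro i
    have h1 : |A i i| ≤ c :=
      Finset.single_le_sum (f := fun k => |A k k|) (fun k _ => abs_nonneg _) (Finset.mem_univ i)
    have h2 : -A i i ≤ |A i i| := neg_le_abs _
    linarith
  set s : ℝ := t * c with hs
  set Ms : Matrix S S ℝ := t • A + s • (1 : Matrix S S ℝ) with hMs
  have hMsnn : ∀ i j, 0 ≤ Ms i j := by
    intro i j
    by_cases hij : i = j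
    · subst hij
      have : Ms i i = t * (A i i + c) := by
        simp [hMs, Matrix.add_apply, Matrix.smul_apply, Matrix.one_apply, hs, smul_eq_mul]
        ring
      rw [this]
      exact mul_nonneg ht (hcA i)
    · have : Ms i j = t * A i j := by
        simp [hMs, Matrix.add_apply, Matrix.smul_apply, Matrix.one_apply, hij, smul_eq_mul]
      rw [this]
      exact mul_nonneg ht (hMetzler i j hij)
  have hsubMs : Ms.submatrix (Subtype.val : Ω → S) Subtype.val =
      t • A.submatrix (Subtype.val : Ω → S) Subtype.val + s • (1 : Matrix Ω Ω ℝ) := by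
    ext x y
    simp [hMs, Matrix.submatrix_apply, Matrix.add_apply, Matrix.smul_apply, Matrix.one_apply,
      Subtype.val_inj]
  have hsubMsnn : ∀ x y : Ω, 0 ≤ (Ms.submatrix (Subtype.val : Ω → S) Subtype.val) x y :=
    fun x y => hMsnn _ _
  -- exponentials via shift
  set E : Matrix S S ℝ := NormedSpace.exp (t • A) with hE
  set F : Matrix Ω Ω ℝ :=
    NormedSpace.exp (t • A.submatrix (Subtype.val : Ω → S) Subtype.val) with hF
  have hEshift : E = Real.exp (-s) • NormedSpace.exp Ms := by
    rw [hE, hMs]; exact fsp_exp_shift (t • A) s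
  have hFshift : F = Real.exp (-s) •
      NormedSpace.exp (Ms.submatrix (Subtype.val : Ω → S) Subtype.val) := by
    rw [hF, hsubMs]; exact fsp_exp_shift _ s
  have hEnn : ∀ i j, 0 ≤ E i j := by
    intro i j
    rw [hEshift]
    exact mul_nonneg (Real.exp_nonneg _) (fsp_exp_nonneg Ms hMsnn i j)
  have hFnn : ∀ x y : Ω, 0 ≤ F x y := by
    intro x y
    rw [hFshift]
    exact mul_nonneg (Real.exp_nonneg _)
      (fsp_exp_nonneg _ (fun a b => hMsnn _ _) x y)
  have hFE : ∀ x y : Ω, F x y ≤ E x.val y.val := by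
    intro x y
    rw [hEshift, hFshift]
    exact mul_le_mul_of_nonneg_left (fsp_exp_sub_le Ω Ms hMsnn x y) (Real.exp_nonneg _)
  -- mulVec formulas
  have hPdef : ∀ x : S, E.mulVec P0 x = ∑ y, E x y * P0 y := by
    intro x; rfl
  have hQdef : ∀ x : Ω, F.mulVec (fun y : Ω => P0 y) x = ∑ y : Ω, F x y * P0 y := by
    intro x; rfl
  have hPnn : ∀ x, 0 ≤ E.mulVec P0 x := by
    intro x
    rw [hPdef]
    exact Finset.sum_nonneg fun y _ => mul_nonneg (hEnn x y) (hP0 y)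
  have hQP : ∀ x : Ω, F.mulVec (fun y : Ω => P0 y) x ≤ E.mulVec P0 x.val := by
    intro x
    rw [hPdef, hQdef]
    calc ∑ y : Ω, F x y * P0 y ≤ ∑ y : Ω, E x.val y.val * P0 y.val :=
          Finset.sum_le_sum fun y _ => mul_le_mul_of_nonneg_right (hFE x y) (hP0 y)
      _ ≤ ∑ y, E x.val y * P0 y :=
          fsp_sum_subtype_le Ω (fun y => E x.val y * P0 y)
            (fun y => mul_nonneg (hEnn _ _) (hP0 y))
  have hcolE : ∀ j, ∑ i, E i j = 1 := by
    intro j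
    refine fsp_colsum_exp (t • A) (fun k => ?_) j
    simp [Matrix.smul_apply, smul_eq_mul, ← Finset.mul_sum, hcols]
  have hPsum : ∑ x, E.mulVec P0 x = 1 := by
    simp only [hPdef]
    rw [Finset.sum_comm]
    simp only [← Finset.sum_mul]
    simp [hcolE, hP0sum]
  intro x
  refine ⟨?_, hQP x⟩
  -- lower bound
  have key : E.mulVec P0 x.val - F.mulVec (fun y : Ω => P0 y) x ≤ ε := by
    have h1 : E.mulVec P0 x.val - F.mulVec (fun y : Ω => P0 y) x ≤
        ∑ y : Ω, (E.mulVec P0 y.val - F.mulVec (fun z : Ω => P0 z) y) :=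
      Finset.single_le_sum (f := fun y : Ω => E.mulVec P0 y.val - F.mulVec (fun z : Ω => P0 z) y)
        (fun y _ => sub_nonneg.2 (hQP y)) (Finset.mem_univ x)
    have h2 : ∑ y : Ω, E.mulVec P0 y.val ≤ 1 := by
      rw [← hPsum]
      exact fsp_sum_subtype_le Ω (E.mulVec P0) hPnn
    have h3 : 1 - ε ≤ ∑ y : Ω, F.mulVec (fun z : Ω => P0 z) y := hmass
    rw [Finset.sum_sub_distrib] at h1
    linarith
  linarith [key]
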